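/- Among all symmetric probability densities K on ℝ with finite second moment, the functional J(K) = k₂(K)^{2/5} R(K)^{4/5}, where k₂(K) = ∫ u² K(u) du and R(K) = ∫ K(u)² du, is minimised by the Epanechnikov kernel K*(x) = (3/4)(1 − x²) 1{|x| ≤ 1} (up to rescaling K_a(u) = a⁻¹K(u/a), under which J is invariant). -/

import Mathlib

set_option maxHeartbeats 1000000

open MeasureTheory

/-- The Epanechnikov kernel (3/4)(1 − x²) on [−1, 1]. -/
noncomputable def epanechnikov (x : ℝ) : ℝ :=
  if |x| ≤ 1 then (3 / 4) * (1 - x ^ 2) else 0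

/-- The criterion J(K) = k₂(K)^{2/5} R(K)^{4/5}. -/
noncomputable def kernelCriterion (K : ℝ → ℝ) : ℝ :=
  (∫ u, u ^ 2 * K u) ^ ((2 : ℝ) / 5) * (∫ u, (K u) ^ 2) ^ ((4 : ℝ) / 5)

/-- Integral of the squared truncated parabola. -/
lemma integral_parabola_sq (b : ℝ) (hb : 0 < b) :
    ∫ u, Set.indicator (Set.Icc (-b) b) (fun u => (b^2 - u^2)^2) u = (16/15) * b^5 := by
  rw [MeasureTheory.integral_indicator measurableSet_Icc,
    MeasureTheory.integral_Icc_eq_integral_Ioc,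
    ← intervalIntegral.integral_of_le (by linarith)]
  have h : ∀ u : ℝ, (b^2 - u^2)^2 = b^4 - 2*b^2*u^2 + u^4 := by intro u; ring
  simp_rw [h]
  rw [intervalIntegral.integral_add ((intervalIntegrable_const).sub
      ((intervalIntegral.intervalIntegrable_pow 2).const_mul _))
      (intervalIntegral.intervalIntegrable_pow 4),
    intervalIntegral.integral_sub intervalIntegrable_const
      ((intervalIntegral.intervalIntegrable_pow 2).const_mul _),
    intervalIntegral.integral_const_mul, integral_pow, integral_pow,
    intervalIntegral.integral_const, smul_eq_mul]
  ring

/-- Key lower bound on R(K) coming from the pointwise inequality (K - f)² ≥ 0 with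
f = a(b² - u²) on [-b, b]. -/
lemma R_lower_bound (K : ℝ → ℝ)
    (hKnonneg : ∀ u, 0 ≤ K u)
    (hKint : Integrable K)
    (hKprob : ∫ u, K u = 1)
    (hk2 : Integrable (fun u => u ^ 2 * K u))
    (hR : Integrable (fun u => (K u) ^ 2))
    (a b : ℝ) (ha : 0 < a) (hb : 0 < b) :
    2*a*(b^2 - ∫ u, u^2 * K u) - (16/15)*a^2*b^5 ≤ ∫ u, (K u)^2 := by
  set f : ℝ → ℝ := Set.indicator (Set.Icc (-b) b) (fun u => a*(b^2 - u^2)) with hf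
  have hfcont : Continuous (fun u : ℝ => a*(b^2 - u^2)) := by continuity
  have hfmeas : Measurable f := hfcont.measurable.indicator measurableSet_Icc
  have hfbound : ∀ u, ‖f u‖ ≤ a * b^2 := by
    intro u
    rw [hf, Set.indicator_apply]
    split_ifs with h
    · obtain ⟨h1, h2⟩ := Set.mem_Icc.1 h
      have hnn : (0:ℝ) ≤ b^2 - u^2 := by nlinarith
      rw [Real.norm_eq_abs, abs_of_nonneg (by positivity)]
      nlinarith
    · simp; positivity
  have hfK_int : Integrable (fun u => f u * K u) :=
    hKint.bdd_mul (c := a * b^2) hfmeas.aestronglyMeasurable (Filter.Eventually.of_forall hfbound)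
  have hpoly_eq : (fun u : ℝ => a*(b^2 - u^2) * K u)
      = fun u => (a*b^2) * K u - a * (u^2 * K u) := by
    funext u; ring
  have hpoly_int : Integrable (fun u : ℝ => a*(b^2 - u^2) * K u) := by
    rw [hpoly_eq]; exact (hKint.const_mul _).sub (hk2.const_mul a)
  have hf2_eq : (fun u => f u ^ 2)
      = fun u => a^2 * Set.indicator (Set.Icc (-b) b) (fun u => (b^2 - u^2)^2) u := by
    funext u
    rw [hf, Set.indicator_apply, Set.indicator_apply]
    split_ifs <;> ring
  have hf2_int : Integrable (fun u => f u ^ 2) := by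
    rw [hf2_eq]
    refine Integrable.const_mul ?_ _
    rw [integrable_indicator_iff measurableSet_Icc]
    exact (by continuity : Continuous fun u : ℝ => (b^2 - u^2)^2).integrableOn_Icc
  -- ∫ f K ≥ a (b² - μ)
  have h1 : ∫ u, a*(b^2 - u^2) * K u ≤ ∫ u, f u * K u := by
    refine integral_mono hpoly_int hfK_int (fun u => ?_)
    rw [hf, Set.indicator_apply]
    split_ifs with h
    · exact le_refl _
    · rw [Set.mem_Icc, not_and_or, not_le, not_le] at h
      have hu : b^2 - u^2 ≤ 0 := by rcases h with h | h <;> nlinarith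
      rw [zero_mul]
      have h6 := mul_nonneg (mul_nonneg ha.le (by linarith : (0:ℝ) ≤ u^2 - b^2)) (hKnonneg u)
      nlinarith
  have h2 : ∫ u, a*(b^2 - u^2) * K u = a * (b^2 - ∫ u, u^2 * K u) := by
    rw [hpoly_eq, integral_sub (hKint.const_mul _) (hk2.const_mul a),
      MeasureTheory.integral_const_mul, MeasureTheory.integral_const_mul, hKprob]
    ring
  have h3 : ∫ u, f u ^ 2 = a^2 * ((16/15) * b^5) := by
    rw [hf2_eq, MeasureTheory.integral_const_mul, integral_parabola_sq b hb]
  have h4 : (0:ℝ) ≤ ∫ u, (K u - f u)^2 := integral_nonneg (fun u => sq_nonneg _)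
  have hexp : (fun u => (K u - f u)^2)
      = fun u => ((K u)^2 - 2 * (f u * K u)) + f u ^ 2 := by
    funext u; ring
  have i1 : Integrable (fun u => (K u)^2 - 2 * (f u * K u)) := hR.sub (hfK_int.const_mul 2)
  have i2 : Integrable (fun u => 2 * (f u * K u)) := hfK_int.const_mul 2
  have h5 : ∫ u, (K u - f u)^2
      = ((∫ u, (K u)^2) - 2 * ∫ u, f u * K u) + ∫ u, f u ^ 2 := by
    rw [hexp, integral_add i1 hf2_int, integral_sub hR i2, MeasureTheory.integral_const_mul]
  rw [h5, h3] at h4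
  rw [h2] at h1
  linarith

lemma epan_k2 : ∫ u, u ^ 2 * epanechnikov u = 1/5 := by
  have h : (fun u : ℝ => u ^ 2 * epanechnikov u)
      = Set.indicator (Set.Icc (-1:ℝ) 1) (fun u => 3/4*u^2 - 3/4*u^4) := by
    funext u
    rw [Set.indicator_apply]
    simp only [epanechnikov, Set.mem_Icc, ← abs_le]
    split_ifs with h
    · ring
    · simp
  rw [h, MeasureTheory.integral_indicator measurableSet_Icc,
    MeasureTheory.integral_Icc_eq_integral_Ioc,
    ← intervalIntegral.integral_of_le (by norm_num : (-1:ℝ) ≤ 1),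
    intervalIntegral.integral_sub ((intervalIntegral.intervalIntegrable_pow 2).const_mul _)
      ((intervalIntegral.intervalIntegrable_pow 4).const_mul _),
    intervalIntegral.integral_const_mul, intervalIntegral.integral_const_mul,
    integral_pow, integral_pow]
  norm_num

lemma epan_R : ∫ u, (epanechnikov u) ^ 2 = 3/5 := by
  have h : (fun u : ℝ => (epanechnikov u) ^ 2)
      = Set.indicator (Set.Icc (-1:ℝ) 1) (fun u => 9/16 - 9/8*u^2 + 9/16*u^4) := by
    funext u
    rw [Set.indicator_apply]
    simp only [epanechnikov, Set.mem_Icc, ← abs_le]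
    split_ifs with h
    · ring
    · simp
  rw [h, MeasureTheory.integral_indicator measurableSet_Icc,
    MeasureTheory.integral_Icc_eq_integral_Ioc,
    ← intervalIntegral.integral_of_le (by norm_num : (-1:ℝ) ≤ 1),
    intervalIntegral.integral_add (intervalIntegrable_const.sub
      ((intervalIntegral.intervalIntegrable_pow 2).const_mul _))
      ((intervalIntegral.intervalIntegrable_pow 4).const_mul _),
    intervalIntegral.integral_sub intervalIntegrable_const
      ((intervalIntegral.intervalIntegrable_pow 2).const_mul _),
    intervalIntegral.integral_const_mul, intervalIntegral.integral_const_mul,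
    integral_pow, integral_pow, intervalIntegral.integral_const, smul_eq_mul]
  norm_num

/-- among all symmetric probability densities with finite second
moment (and finite R(K)), the functional J(K) = k₂(K)^{2/5} R(K)^{4/5} is
minimised by the Epanechnikov kernel. -/
theorem epanechnikov_minimises_criterion
    (K : ℝ → ℝ)
    (hKnonneg : ∀ u, 0 ≤ K u)
    (hKsymm : ∀ u, K (-u) = K u)
    (hKint : Integrable K)
    (hKprob : ∫ u, K u = 1)
    (hk2 : Integrable (fun u => u ^ 2 * K u))
    (hR : Integrable (fun u => (K u) ^ 2)) :
    kernelCriterion epanechnikov ≤ kernelCriterion K := by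
  set μ := ∫ u, u ^ 2 * K u with hμ
  set R := ∫ u, (K u) ^ 2 with hRdef
  have hμnonneg : 0 ≤ μ := integral_nonneg (fun u => mul_nonneg (sq_nonneg u) (hKnonneg u))
  have hRnonneg : 0 ≤ R := integral_nonneg (fun u => sq_nonneg _)
  -- second moment is strictly positive
  have hμpos : 0 < μ := by
    rcases lt_or_eq_of_le hμnonneg with h | h
    · exact h
    exfalso
    have hz : (fun u => u ^ 2 * K u) =ᵐ[volume] 0 :=
      (integral_eq_zero_iff_of_nonneg (fun u => mul_nonneg (sq_nonneg u) (hKnonneg u)) hk2).1 h.symm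
    have hne : ∀ᵐ (u : ℝ), u ≠ 0 := by
      rw [ae_iff]; simpa using Real.volume_singleton
    have hK0 : K =ᵐ[volume] 0 := by
      filter_upwards [hz, hne] with u h1 h2
      have hu2 : u ^ 2 ≠ 0 := pow_ne_zero 2 h2
      simpa [hu2] using h1
    rw [integral_congr_ae hK0] at hKprob
    simp at hKprob
  -- apply the key bound with the optimal parabola
  set b := Real.sqrt (5 * μ) with hbdef
  have hbpos : 0 < b := Real.sqrt_pos.2 (by linarith)
  have hb2 : b ^ 2 = 5 * μ := Real.sq_sqrt (by linarith)
  have hb5 : b ^ 5 ≠ 0 := pow_ne_zero 5 hbpos.ne'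
  set a := 15 * μ / (4 * b ^ 5) with hadef
  have ha : 0 < a := by positivity
  have hkey := R_lower_bound K hKnonneg hKint hKprob hk2 hR a b ha hbpos
  have hval : 2*a*(b^2 - μ) - (16/15)*a^2*b^5 = 15 * μ^2 / b^5 := by
    rw [hadef, hb2]
    field_simp
    ring
  rw [← hμ, hval] at hkey
  -- deduce μ R² ≥ 9/125
  have hb10 : b ^ 10 = 3125 * μ ^ 5 := by
    have : b ^ 10 = (b ^ 2) ^ 5 := by ring
    rw [this, hb2]; ring
  have h15 : (0:ℝ) ≤ 15 * μ^2 / b^5 := by positivity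
  have hsq : (15 * μ^2 / b^5)^2 ≤ R^2 := pow_le_pow_left₀ h15 hkey 2
  have hmain : (9:ℝ)/125 ≤ μ * R^2 := by
    have h1 : μ * (15 * μ^2 / b^5)^2 ≤ μ * R^2 :=
      mul_le_mul_of_nonneg_left hsq hμnonneg
    have h2 : μ * (15 * μ^2 / b^5)^2 = 9/125 := by
      rw [div_pow]
      rw [← pow_mul]
      norm_num
      rw [hb10]
      field_simp
      ring
    linarith
  -- conclude via rpow algebra
  have hleft : kernelCriterion epanechnikov = ((9:ℝ)/125) ^ ((2:ℝ)/5) := by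
    unfold kernelCriterion
    rw [epan_k2, epan_R]
    rw [show ((3:ℝ)/5) = ((9:ℝ)/25) ^ ((1:ℝ)/2) by
      rw [show ((9:ℝ)/25) = (3/5)^(2:ℕ) by norm_num, ← Real.rpow_natCast ((3:ℝ)/5) 2,
        ← Real.rpow_mul (by norm_num)]
      norm_num]
    rw [← Real.rpow_mul (by norm_num)]
    rw [show ((9:ℝ)/125) = (1/5) * (9/25) by norm_num,
      Real.mul_rpow (by norm_num) (by norm_num)]
    norm_num
  have hright : kernelCriterion K = (μ * R^2) ^ ((2:ℝ)/5) := by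
    unfold kernelCriterion
    rw [← hμ, ← hRdef, Real.mul_rpow hμnonneg (sq_nonneg R)]
    congr 1
    rw [← Real.rpow_natCast R 2, ← Real.rpow_mul hRnonneg]
    norm_num
  rw [hleft, hright]
  exact Real.rpow_le_rpow (by norm_num) hmain (by norm_num)
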